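/- Let Z be a compact metric space, L a positive bounded linear operator on C(Z,ℝ) with positive maximal eigenvalue Λ and strictly positive eigenfunction h, and suppose the normalized operator L̃ G = Λ^{−1} h^{−1} L(hG) satisfies L̃ⁿ G → c(G)·𝟙 uniformly for every continuous G, where c(G) is a constant. Then there exists a unique Borel probability measure μ₀ with L̃* μ₀ = μ₀, and for every g ∈ C(Z,ℝ), the sequence Λ^{−n} Lⁿ g converges uniformly to h · ∫ (g/h) dμ₀. -/

import Mathlib

open MeasureTheory Filter Topology

open scoped ENNReal NNReal

set_option linter.unusedSectionVars false
set_option linter.unusedVariables false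

section AuxiliaryRMK
open Set


section RMK
variable {Z : Type*} [MetricSpace Z] [CompactSpace Z] [Nonempty Z]
  [MeasurableSpace Z] [BorelSpace Z]
variable (c : C(Z, ℝ) →ₗ[ℝ] ℝ)

/-- admissible values for the Riesz content of `K`. -/
def rieszA (K : Set Z) : Set ℝ :=
  c '' {f : C(Z, ℝ) | (∀ z, 0 ≤ f z) ∧ ∀ z ∈ K, 1 ≤ f z}

noncomputable def rieszR (K : Set Z) : ℝ := sInf (rieszA c K)

variable {c}

lemma riesz_mono (hpos : ∀ f : C(Z, ℝ), (∀ z, 0 ≤ f z) → 0 ≤ c f) {f g : C(Z, ℝ)} (h : ∀ z, f z ≤ g z) : c f ≤ c g := by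
  have h0 : 0 ≤ c (g - f) := hpos _ (fun z => by simpa using sub_nonneg.2 (h z))
  rw [map_sub] at h0; linarith

lemma rieszA_one_mem (hone : c 1 = 1) (K : Set Z) : (1 : ℝ) ∈ rieszA c K := by
  refine hone ▸ ⟨1, ⟨fun z => zero_le_one, fun z _ => le_refl _⟩, rfl⟩

lemma rieszA_nonempty (hone : c 1 = 1) (K : Set Z) : (rieszA c K).Nonempty := ⟨1, rieszA_one_mem hone K⟩

lemma rieszA_nonneg (hpos : ∀ f : C(Z, ℝ), (∀ z, 0 ≤ f z) → 0 ≤ c f) {K : Set Z} {x : ℝ} (hx : x ∈ rieszA c K) : 0 ≤ x := by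
  obtain ⟨f, hf, rfl⟩ := hx; exact hpos f hf.1

lemma rieszA_bddBelow (hpos : ∀ f : C(Z, ℝ), (∀ z, 0 ≤ f z) → 0 ≤ c f) (K : Set Z) : BddBelow (rieszA c K) :=
  ⟨0, fun x hx => rieszA_nonneg hpos hx⟩

lemma rieszR_nonneg (hpos : ∀ f : C(Z, ℝ), (∀ z, 0 ≤ f z) → 0 ≤ c f) (K : Set Z) : 0 ≤ rieszR c K :=
  Real.sInf_nonneg (fun _ hx => rieszA_nonneg hpos hx)

lemma rieszR_le_one (hpos : ∀ f : C(Z, ℝ), (∀ z, 0 ≤ f z) → 0 ≤ c f) (hone : c 1 = 1) (K : Set Z) : rieszR c K ≤ 1 :=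
  csInf_le (rieszA_bddBelow hpos K) (rieszA_one_mem hone K)

lemma rieszR_mono (hpos : ∀ f : C(Z, ℝ), (∀ z, 0 ≤ f z) → 0 ≤ c f) (hone : c 1 = 1) {K₁ K₂ : Set Z} (h : K₁ ⊆ K₂) : rieszR c K₁ ≤ rieszR c K₂ := by
  apply csInf_le_csInf (rieszA_bddBelow hpos K₁) (rieszA_nonempty hone K₂)
  rintro x ⟨f, hf, rfl⟩
  exact ⟨f, ⟨hf.1, fun z hz => hf.2 z (h hz)⟩, rfl⟩

lemma rieszR_le (hpos : ∀ f : C(Z, ℝ), (∀ z, 0 ≤ f z) → 0 ≤ c f) {K : Set Z} {f : C(Z, ℝ)} (h0 : ∀ z, 0 ≤ f z) (h1 : ∀ z ∈ K, 1 ≤ f z) :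
    rieszR c K ≤ c f :=
  csInf_le (rieszA_bddBelow hpos K) ⟨f, ⟨h0, h1⟩, rfl⟩

lemma le_rieszR (hone : c 1 = 1) {K : Set Z} {a : ℝ}
    (h : ∀ f : C(Z, ℝ), (∀ z, 0 ≤ f z) → (∀ z ∈ K, 1 ≤ f z) → a ≤ c f) :
    a ≤ rieszR c K :=
  le_csInf (rieszA_nonempty hone K) (by rintro x ⟨f, hf, rfl⟩; exact h f hf.1 hf.2)

lemma rieszR_union_le (hpos : ∀ f : C(Z, ℝ), (∀ z, 0 ≤ f z) → 0 ≤ c f) (hone : c 1 = 1) (K₁ K₂ : Set Z) :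
    rieszR c (K₁ ∪ K₂) ≤ rieszR c K₁ + rieszR c K₂ := by
  rw [← sub_le_iff_le_add]
  apply le_rieszR hone
  intro f₁ hf₁0 hf₁1
  rw [sub_le_iff_le_add, add_comm, ← sub_le_iff_le_add]
  apply le_rieszR hone
  intro f₂ hf₂0 hf₂1
  rw [sub_le_iff_le_add, ← map_add]
  apply csInf_le (rieszA_bddBelow hpos _)
  refine ⟨f₂ + f₁, ⟨fun z => add_nonneg (hf₂0 z) (hf₁0 z), ?_⟩, rfl⟩
  rintro z (hz | hz)
  · have := hf₁1 z hz; have := hf₂0 z; simp only [ContinuousMap.add_apply]; linarith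
  · have := hf₂1 z hz; have := hf₁0 z; simp only [ContinuousMap.add_apply]; linarith

lemma rieszR_union_disjoint (hpos : ∀ f : C(Z, ℝ), (∀ z, 0 ≤ f z) → 0 ≤ c f) (hone : c 1 = 1) {K₁ K₂ : Set Z} (hK₁ : IsCompact K₁)
    (hd : Disjoint K₁ K₂) (hK₂c : IsClosed K₂) :
    rieszR c K₁ + rieszR c K₂ ≤ rieszR c (K₁ ∪ K₂) := by
  obtain ⟨g, hg0, hg1, hg01⟩ := exists_continuous_zero_one_of_isCompact hK₁ hK₂c hd
  -- g = 0 on K₁, g = 1 on K₂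
  apply le_rieszR hone
  intro f hf0 hf1
  have e1 : rieszR c K₁ ≤ c (f * (1 - g)) := by
    apply rieszR_le hpos
    · intro z
      have := (hg01 z).2
      exact mul_nonneg (hf0 z) (by simpa using this)
    · intro z hz
      have h1 : g z = 0 := hg0 hz
      have h2 : (1:ℝ) ≤ f z := hf1 z (Or.inl hz)
      simp [ContinuousMap.mul_apply, ContinuousMap.sub_apply, h1, h2]
  have e2 : rieszR c K₂ ≤ c (f * g) := by
    apply rieszR_le hpos
    · intro z; exact mul_nonneg (hf0 z) (hg01 z).1
    · intro z hz
      have h1 : g z = 1 := hg1 hz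
      have h2 : (1:ℝ) ≤ f z := hf1 z (Or.inr hz)
      simp [ContinuousMap.mul_apply, h1, h2]
  have : c (f * (1 - g)) + c (f * g) = c f := by
    rw [← map_add]; congr 1; ring
  linarith

/-- The Riesz content associated to a positive normalized functional. -/
noncomputable def rieszCon (hpos : ∀ f : C(Z, ℝ), (∀ z, 0 ≤ f z) → 0 ≤ c f) (hone : c 1 = 1) : Content Z where
  toFun K := ⟨rieszR c K, rieszR_nonneg hpos K⟩
  mono' K₁ K₂ h := by
    exact rieszR_mono hpos hone h
  sup_disjoint' K₁ K₂ hd h₁ h₂ := by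
    have := le_antisymm (rieszR_union_le hpos hone (K₁ : Set Z) K₂)
      (rieszR_union_disjoint hpos hone K₁.2 hd h₂)
    ext
    exact this
  sup_le' K₁ K₂ := by
    exact rieszR_union_le hpos hone (K₁ : Set Z) K₂

end RMK

section Meas
variable {Z : Type*} [MetricSpace Z] [CompactSpace Z] [Nonempty Z]
  [MeasurableSpace Z] [BorelSpace Z]
variable {c : C(Z, ℝ) →ₗ[ℝ] ℝ}

lemma rieszR_univ (hpos : ∀ f : C(Z, ℝ), (∀ z, 0 ≤ f z) → 0 ≤ c f) (hone : c 1 = 1) : rieszR c (univ : Set Z) = 1 := by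
  refine le_antisymm (rieszR_le_one hpos hone _) (le_rieszR hone ?_)
  intro f hf0 hf1
  rw [← hone]
  exact riesz_mono hpos (fun z => by simpa using hf1 z (mem_univ z))

lemma rieszMeasure_univ (hpos : ∀ f : C(Z, ℝ), (∀ z, 0 ≤ f z) → 0 ≤ c f) (hone : c 1 = 1) : (rieszCon hpos hone).measure (univ : Set Z) = 1 := by
  rw [Content.measure_apply _ MeasurableSet.univ,
    (rieszCon hpos hone).outerMeasure_of_isOpen univ isOpen_univ,
    (rieszCon hpos hone).innerContent_of_isCompact isCompact_univ isOpen_univ]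
  have : (rieszCon hpos hone).toFun ⟨univ, isCompact_univ⟩ = 1 := by
    ext
    exact rieszR_univ hpos hone
  show ((rieszCon hpos hone).toFun ⟨univ, isCompact_univ⟩ : ℝ≥0∞) = 1
  rw [this, ENNReal.coe_one]

instance (hpos : ∀ f : C(Z, ℝ), (∀ z, 0 ≤ f z) → 0 ≤ c f) (hone : c 1 = 1) : IsProbabilityMeasure (rieszCon hpos hone).measure :=
  ⟨rieszMeasure_univ hpos hone⟩

lemma cf_le_measure_of_support (hpos : ∀ f : C(Z, ℝ), (∀ z, 0 ≤ f z) → 0 ≤ c f) (hone : c 1 = 1) {f : C(Z, ℝ)} {U : Set Z} (hU : IsOpen U)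
    (hf0 : ∀ z, 0 ≤ f z) (hf1 : ∀ z, f z ≤ 1) (hsupp : tsupport f ⊆ U) :
    ENNReal.ofReal (c f) ≤ (rieszCon hpos hone).measure U := by
  rw [Content.measure_apply _ hU.measurableSet,
    (rieszCon hpos hone).outerMeasure_of_isOpen U hU]
  have hK : IsCompact (tsupport f) := IsCompact.of_isClosed_subset isCompact_univ
    (isClosed_tsupport _) (subset_univ _)
  have h1 : ((rieszCon hpos hone) (⟨tsupport f, hK⟩ : TopologicalSpace.Compacts Z) : ℝ≥0∞) ≤
      (rieszCon hpos hone).innerContent ⟨U, hU⟩ :=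
    (rieszCon hpos hone).le_innerContent _ _ hsupp
  refine le_trans ?_ h1
  have h2 : c f ≤ rieszR c (tsupport f) := by
    apply le_rieszR hone
    intro g hg0 hg1
    apply riesz_mono hpos
    intro z
    by_cases hz : z ∈ tsupport f
    · exact le_trans (hf1 z) (hg1 z hz)
    · rw [image_eq_zero_of_notMem_tsupport hz]; exact hg0 z
  have : ((rieszCon hpos hone) (⟨tsupport f, hK⟩ : TopologicalSpace.Compacts Z) : ℝ≥0∞) =
      ENNReal.ofReal (rieszR c (tsupport f)) := by
    show ((rieszCon hpos hone).toFun _ : ℝ≥0∞) = _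
    simp [rieszCon, ENNReal.ofReal, Real.toNNReal_of_nonneg (rieszR_nonneg hpos _)]
    rfl
  rw [this]
  exact ENNReal.ofReal_le_ofReal h2

end Meas

section Repr
variable {Z : Type*} [MetricSpace Z] [CompactSpace Z] [Nonempty Z]
  [MeasurableSpace Z] [BorelSpace Z]
variable {c : C(Z, ℝ) →ₗ[ℝ] ℝ}

private lemma exists_mem_Ioc_step (a : ℕ → ℝ) :
    ∀ (n : ℕ) (x : ℝ), x ∈ Ioc (a 0) (a n) → ∃ i, i < n ∧ x ∈ Ioc (a i) (a (i + 1)) := by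
  intro n
  induction n with
  | zero => intro x hx; exact absurd hx.2 (not_le.2 hx.1)
  | succ n ih =>
    intro x hx
    by_cases hxn : x ≤ a n
    · obtain ⟨i, hi, hmem⟩ := ih x ⟨hx.1, hxn⟩
      exact ⟨i, hi.trans (Nat.lt_succ_self n), hmem⟩
    · exact ⟨n, Nat.lt_succ_self n, ⟨not_le.1 hxn, hx.2⟩⟩

set_option maxHeartbeats 2000000 in
theorem c_le_integral (hpos : ∀ f : C(Z, ℝ), (∀ z, 0 ≤ f z) → 0 ≤ c f) (hone : c 1 = 1)
    (f : C(Z, ℝ)) : c f ≤ ∫ z, f z ∂(rieszCon hpos hone).measure := by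
  classical
  set μ := (rieszCon hpos hone).measure with hμ
  have hint : ∀ g : C(Z, ℝ), Integrable (fun z => g z) μ := fun g =>
    g.continuous.integrable_of_hasCompactSupport (HasCompactSupport.of_compactSpace _)
  apply _root_.le_of_forall_pos_le_add
  intro δ hδ
  set ε : ℝ := δ / 4 with hε
  have hεpos : 0 < ε := by positivity
  set M : ℝ := ‖f‖ with hM
  have hM0 : 0 ≤ M := norm_nonneg f
  set n : ℕ := ⌈2 * M / ε⌉₊ + 1 with hn
  have hn0 : 0 < n := Nat.succ_pos _
  set a : ℕ → ℝ := fun i => -M - ε + i * ε with ha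
  have han : M ≤ a n := by
    have h1 : 2 * M / ε ≤ (⌈2 * M / ε⌉₊ : ℝ) := Nat.le_ceil _
    have h2 : 2 * M ≤ (⌈2 * M / ε⌉₊ : ℝ) * ε := by
      rw [div_le_iff₀ hεpos] at h1; linarith
    simp only [ha, hn]
    push_cast
    nlinarith
  set η : ℝ := δ / (2 * ((n : ℝ)^2 * ε + 1)) with hη
  have hηpos : 0 < η := by positivity
  -- the sets E i
  set E : Fin n → Set Z := fun i => f ⁻¹' (Ioc (a i) (a (i + 1))) with hE
  have hEmeas : ∀ i, MeasurableSet (E i) :=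
    fun i => (f.continuous.measurable) measurableSet_Ioc
  have hEdisj : Pairwise (Function.onFun Disjoint E) := by
    intro i j hij
    have key : ∀ i j : Fin n, (i : ℕ) < (j : ℕ) → Disjoint (E i) (E j) := by
      intro i j hij
      apply Disjoint.preimage
      rw [Set.Ioc_disjoint_Ioc]
      have : (i : ℝ) + 1 ≤ (j : ℝ) := by exact_mod_cast hij
      have : a (i + 1) ≤ a j := by simp only [ha]; push_cast; nlinarith
      calc min (a (i+1)) (a (j+1)) ≤ a (i + 1) := min_le_left _ _
        _ ≤ a j := this
        _ ≤ max (a i) (a j) := le_max_right _ _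
    rcases lt_or_gt_of_ne (fun h : (i:ℕ) = (j:ℕ) => hij (Fin.ext h)) with h | h
    · exact key i j h
    · exact (key j i h).symm
  have hEcover : (⋃ i, E i) = univ := by
    apply eq_univ_of_forall
    intro z
    have hz1 : a 0 < f z := by
      have := abs_le.1 (f.norm_coe_le_norm z)  -- |f z| ≤ M
      simp only [ha]
      push_cast
      linarith [this.1]
    have hz2 : f z ≤ a n := by
      have := abs_le.1 (f.norm_coe_le_norm z)
      linarith [this.2, han]
    obtain ⟨i, hi, hmem⟩ := exists_mem_Ioc_step a n (f z) ⟨hz1, hz2⟩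
    exact mem_iUnion.2 ⟨⟨i, hi⟩, hmem⟩
  have hEfin : ∀ i, μ (E i) ≠ ∞ := fun i => (measure_lt_top μ _).ne
  -- the open sets V i
  have hW : ∀ i : Fin n, ∃ W ⊇ E i, IsOpen W ∧ μ W < μ (E i) + ENNReal.ofReal η := by
    intro i
    exact Set.exists_isOpen_lt_add (E i) (hEfin i)
      (by simpa using ENNReal.ofReal_pos.2 hηpos |>.ne')
  choose W hWE hWopen hWlt using hW
  set b : ℕ → ℝ := fun i => a (i + 1) + ε with hb
  set V : Fin n → Set Z := fun i => f ⁻¹' (Iio (b i)) ∩ W i with hV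
  have hVopen : ∀ i, IsOpen (V i) :=
    fun i => ((isOpen_Iio).preimage f.continuous).inter (hWopen i)
  have hEV : ∀ i, E i ⊆ V i := by
    intro i z hz
    refine ⟨?_, hWE i hz⟩
    have : f z ≤ a ((i : ℕ) + 1) := hz.2
    simp only [mem_preimage, mem_Iio, hb]
    linarith
  have hVlt : ∀ i, μ (V i) < μ (E i) + ENNReal.ofReal η :=
    fun i => lt_of_le_of_lt (measure_mono inter_subset_right) (hWlt i)
  -- partition of unity
  have hcover : (univ : Set Z) ⊆ ⋃ i, V i := by
    rw [← hEcover]; exact iUnion_mono hEV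
  obtain ⟨g, hgsupp, hgsum, hg01, -⟩ :=
    exists_continuous_sum_one_of_isOpen_isCompact hVopen isCompact_univ hcover
  have hprob : μ univ = 1 := rieszMeasure_univ hpos hone
  have hsumg : ∀ z, (∑ i : Fin n, g i z) = 1 := by
    intro z
    have h := hgsum (mem_univ z)
    simpa [Finset.sum_apply] using h
  have hsplit : f = ∑ i : Fin n, (g i * f) := by
    ext z
    rw [ContinuousMap.sum_apply]
    simp only [ContinuousMap.mul_apply]
    rw [← Finset.sum_mul, hsumg z, one_mul]
  have hcf : c f = ∑ i : Fin n, c (g i * f) := by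
    conv_lhs => rw [hsplit]
    rw [map_sum]
  have hcsum1 : ∑ i : Fin n, c (g i) = 1 := by
    have hgone : (∑ i : Fin n, g i) = (1 : C(Z, ℝ)) := by
      ext z
      rw [ContinuousMap.sum_apply]
      simpa using hsumg z
    rw [← map_sum, hgone, hone]
  have hcgi0 : ∀ i, 0 ≤ c (g i) := fun i => hpos _ (fun z => (hg01 i z).1)
  have hab : ∀ i : ℕ, a (i + 1) = a i + ε := by intro i; simp only [ha]; push_cast; ring
  have hbM : ∀ i : Fin n, b i.1 + M = ((i : ℕ) + 1) * ε := by
    intro i; simp only [hb, ha]; push_cast; ring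
  have hbM0 : ∀ i : Fin n, 0 ≤ b i.1 + M := by
    intro i; rw [hbM i]; positivity
  have hbMle : ∀ i : Fin n, b i.1 + M ≤ n * ε := by
    intro i
    rw [hbM i]
    have : ((i : ℕ) : ℝ) + 1 ≤ (n : ℝ) := by exact_mod_cast Nat.succ_le_of_lt i.2
    nlinarith
  set mE : Fin n → ℝ := fun i => (μ (E i)).toReal with hmE
  have hmE0 : ∀ i, 0 ≤ mE i := fun i => ENNReal.toReal_nonneg
  have key1 : ∀ i, c (g i * f) ≤ b i.1 * c (g i) := by
    intro i
    have hle : ∀ z, (g i * f) z ≤ ((b i.1) • g i) z := by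
      intro z
      simp only [ContinuousMap.mul_apply, ContinuousMap.smul_apply, smul_eq_mul]
      by_cases hz : g i z = 0
      · simp [hz]
      · have hzV : z ∈ V i := hgsupp i (subset_tsupport _ hz)
        have hfz : f z < b i.1 := hzV.1
        have := mul_le_mul_of_nonneg_left hfz.le (hg01 i z).1
        linarith [this]
    calc c (g i * f) ≤ c ((b i.1) • g i) := riesz_mono hpos hle
      _ = b i.1 * c (g i) := by rw [_root_.map_smul, smul_eq_mul]
  have key2 : ∀ i, c (g i) ≤ mE i + η := by
    intro i
    have h := cf_le_measure_of_support hpos hone (hVopen i)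
      (fun z => (hg01 i z).1) (fun z => (hg01 i z).2) (hgsupp i)
    have hfinV : μ (V i) ≠ ∞ := (measure_lt_top μ _).ne
    have h2 : c (g i) ≤ (μ (V i)).toReal := by
      calc c (g i) = (ENNReal.ofReal (c (g i))).toReal :=
            (ENNReal.toReal_ofReal (hcgi0 i)).symm
        _ ≤ (μ (V i)).toReal := ENNReal.toReal_mono hfinV h
    have h3 : (μ (V i)).toReal ≤ mE i + η := by
      have hfinE : μ (E i) + ENNReal.ofReal η ≠ ∞ :=
        ENNReal.add_ne_top.2 ⟨hEfin i, ENNReal.ofReal_ne_top⟩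
      have := ENNReal.toReal_mono hfinE (hVlt i).le
      rwa [ENNReal.toReal_add (hEfin i) ENNReal.ofReal_ne_top,
        ENNReal.toReal_ofReal hηpos.le] at this
    linarith
  have hsumE : ∑ i : Fin n, mE i = 1 := by
    have hU : μ (⋃ i, E i) = ∑ i : Fin n, μ (E i) := by
      rw [measure_iUnion hEdisj hEmeas, tsum_fintype]
    rw [hEcover, hprob] at hU
    have : (∑ i : Fin n, μ (E i)).toReal = ∑ i : Fin n, mE i :=
      ENNReal.toReal_sum (fun i _ => hEfin i)
    rw [← hU] at this
    simpa using this.symm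
  -- integral decomposition
  have hintsplit : ∫ z, f z ∂μ = ∑ i : Fin n, ∫ z in E i, f z ∂μ := by
    rw [← setIntegral_univ, ← hEcover]
    exact integral_iUnion_fintype hEmeas hEdisj (fun i => (hint f).integrableOn)
  have key4 : ∀ i, a i.1 * mE i ≤ ∫ z in E i, f z ∂μ := by
    intro i
    have h := setIntegral_mono_on (μ := μ) (f := fun _ => a i.1) (g := fun z => f z)
      (integrableOn_const (measure_lt_top μ _).ne) ((hint f).integrableOn)
      (hEmeas i) (fun x hx => by exact le_of_lt hx.1)
    rwa [setIntegral_const, smul_eq_mul, mul_comm] at h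
  have hintlb : ∑ i : Fin n, a i.1 * mE i ≤ ∫ z, f z ∂μ := by
    rw [hintsplit]
    exact Finset.sum_le_sum (fun i _ => key4 i)
  -- putting everything together
  have step1 : c f ≤ ∑ i : Fin n, b i.1 * c (g i) := by
    rw [hcf]; exact Finset.sum_le_sum (fun i _ => key1 i)
  have step2 : ∑ i : Fin n, b i.1 * c (g i) = ∑ i : Fin n, (b i.1 + M) * c (g i) - M := by
    have : ∑ i : Fin n, (b i.1 + M) * c (g i)
        = ∑ i : Fin n, b i.1 * c (g i) + M * ∑ i : Fin n, c (g i) := by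
      rw [Finset.mul_sum, ← Finset.sum_add_distrib]
      exact Finset.sum_congr rfl (fun i _ => by ring)
    rw [this, hcsum1]; ring
  have step3 : ∑ i : Fin n, (b i.1 + M) * c (g i) ≤ ∑ i : Fin n, (b i.1 + M) * (mE i + η) :=
    Finset.sum_le_sum (fun i _ => mul_le_mul_of_nonneg_left (key2 i) (hbM0 i))
  have step4 : ∑ i : Fin n, (b i.1 + M) * (mE i + η)
      = ∑ i : Fin n, b i.1 * mE i + M * ∑ i : Fin n, mE i + ∑ i : Fin n, (b i.1 + M) * η := by
    rw [Finset.mul_sum, ← Finset.sum_add_distrib, ← Finset.sum_add_distrib]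
    exact Finset.sum_congr rfl (fun i _ => by ring)
  have step5 : ∑ i : Fin n, (b i.1 + M) * η ≤ (n : ℝ) * ((n : ℝ) * ε * η) := by
    calc ∑ i : Fin n, (b i.1 + M) * η ≤ ∑ _i : Fin n, (n : ℝ) * ε * η :=
          Finset.sum_le_sum (fun i _ => mul_le_mul_of_nonneg_right (hbMle i) hηpos.le)
      _ = (n : ℝ) * ((n : ℝ) * ε * η) := by
          rw [Finset.sum_const, Finset.card_univ, Fintype.card_fin, nsmul_eq_mul]
  have step6 : ∑ i : Fin n, b i.1 * mE i = ∑ i : Fin n, a i.1 * mE i + 2 * ε := by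
    have hba : ∀ i : ℕ, b i = a i + 2 * ε := by
      intro i; simp only [hb, hab i]; ring
    have : ∑ i : Fin n, b i.1 * mE i = ∑ i : Fin n, (a i.1 * mE i + 2 * ε * mE i) := by
      exact Finset.sum_congr rfl (fun i _ => by rw [hba]; ring)
    rw [this, Finset.sum_add_distrib, ← Finset.mul_sum, hsumE]
    ring
  have hεη : (n : ℝ) * ((n : ℝ) * ε * η) ≤ δ / 2 := by
    have ht0 : (0:ℝ) ≤ (n : ℝ)^2 * ε := by positivity
    have hpos2 : (0:ℝ) < 2 * ((n : ℝ) ^ 2 * ε + 1) := by positivity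
    have hcanc : η * (2 * ((n : ℝ) ^ 2 * ε + 1)) = δ := by
      rw [hη]; field_simp
    nlinarith [mul_nonneg hηpos.le ht0]
  calc c f ≤ ∑ i : Fin n, (b i.1 + M) * c (g i) - M := by linarith [step1, step2]
    _ ≤ ∑ i : Fin n, (b i.1 + M) * (mE i + η) - M := by linarith [step3]
    _ = ∑ i : Fin n, b i.1 * mE i + M * ∑ i : Fin n, mE i + ∑ i : Fin n, (b i.1 + M) * η - M := by
        rw [step4]
    _ ≤ ∑ i : Fin n, b i.1 * mE i + (n : ℝ) * ((n : ℝ) * ε * η) := by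
        rw [hsumE]; linarith [step5]
    _ = ∑ i : Fin n, a i.1 * mE i + 2 * ε + (n : ℝ) * ((n : ℝ) * ε * η) := by rw [step6]
    _ ≤ ∫ z, f z ∂μ + 2 * ε + δ / 2 := by linarith [hintlb, hεη]
    _ ≤ ∫ z, f z ∂μ + δ := by rw [hε]; linarith

end Repr

theorem exists_repr_measure {Z : Type*} [MetricSpace Z] [CompactSpace Z] [Nonempty Z]
    [MeasurableSpace Z] [BorelSpace Z] {c : C(Z, ℝ) →ₗ[ℝ] ℝ}
    (hpos : ∀ f : C(Z, ℝ), (∀ z, 0 ≤ f z) → 0 ≤ c f) (hone : c 1 = 1) :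
    ∃ μ : Measure Z, IsProbabilityMeasure μ ∧ ∀ f : C(Z, ℝ), ∫ z, f z ∂μ = c f := by
  refine ⟨(rieszCon hpos hone).measure, ⟨rieszMeasure_univ hpos hone⟩, fun f => ?_⟩
  have h1 := c_le_integral hpos hone f
  have h2 := c_le_integral hpos hone (-f)
  rw [map_neg] at h2
  have hreq : ∫ z, (-f) z ∂(rieszCon hpos hone).measure
      = -∫ z, f z ∂(rieszCon hpos hone).measure := by
    simp only [ContinuousMap.neg_apply]
    exact integral_neg _
  rw [hreq] at h2
  linarith


end AuxiliaryRMK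

set_option maxHeartbeats 1000000 in
/-- Let `L` be a positive bounded linear operator on `C(Z,ℝ)` with
positive maximal eigenvalue `Λ` and strictly positive eigenfunction `h`, and suppose
the normalized operator `Lt G = Λ⁻¹ h⁻¹ L(h G)` (with `Lt 1 = 1`) satisfies
`Ltⁿ G → c(G) · 1` uniformly for all continuous `G`. Then there is a unique Borel
probability measure `μ₀` with `Lt* μ₀ = μ₀`, and for every `g ∈ C(Z,ℝ)` the sequence
`Λ^{−n} Lⁿ g` converges uniformly to `h · ∫ (g/h) dμ₀`. -/
theorem ruelle_operator_convergence
    {Z : Type*} [MetricSpace Z] [CompactSpace Z] [Nonempty Z]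
    [MeasurableSpace Z] [BorelSpace Z]
    (L Lt : C(Z, ℝ) →L[ℝ] C(Z, ℝ))
    (hpos : ∀ G : C(Z, ℝ), (∀ z, 0 ≤ G z) → ∀ z, 0 ≤ (L G) z)
    (Λ : ℝ) (hΛ : 0 < Λ)
    (h : C(Z, ℝ)) (hh : ∀ z, 0 < h z) (heig : L h = Λ • h)
    (hLt : ∀ (G : C(Z, ℝ)) (z : Z), Lt G z = Λ⁻¹ * ((L (h * G)) z / h z))
    (hLt1 : Lt 1 = 1)
    (c : C(Z, ℝ) → ℝ)
    (hconv : ∀ G : C(Z, ℝ),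
      Tendsto (fun n : ℕ => (Lt ^ n) G) atTop (𝓝 (ContinuousMap.const Z (c G)))) :
    ∃ μ₀ : ProbabilityMeasure Z,
      (∀ G : C(Z, ℝ),
        ∫ z, (Lt G) z ∂(μ₀ : Measure Z) = ∫ z, G z ∂(μ₀ : Measure Z)) ∧
      (∀ μ₁ : ProbabilityMeasure Z,
        (∀ G : C(Z, ℝ),
          ∫ z, (Lt G) z ∂(μ₁ : Measure Z) = ∫ z, G z ∂(μ₁ : Measure Z)) → μ₁ = μ₀) ∧
      (∀ g gd : C(Z, ℝ), (∀ z, gd z = g z / h z) →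
        Tendsto (fun n : ℕ => (Λ ^ n)⁻¹ • ((L ^ n) g)) atTop
          (𝓝 ((∫ z, gd z ∂(μ₀ : Measure Z)) • h))) := by
  classical
  obtain ⟨z₀⟩ := (inferInstance : Nonempty Z)
  have hpow_succ' : ∀ (n : ℕ) (G : C(Z, ℝ)), (Lt ^ (n + 1)) G = Lt ((Lt ^ n) G) := by
    intro n G; rw [pow_succ']; rfl
  have hpow_succ : ∀ (n : ℕ) (G : C(Z, ℝ)), (Lt ^ (n + 1)) G = (Lt ^ n) (Lt G) := by
    intro n G; rw [pow_succ]; rfl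
  -- positivity of Lt and its powers
  have hLtpos : ∀ G : C(Z, ℝ), (∀ z, 0 ≤ G z) → ∀ z, 0 ≤ (Lt G) z := by
    intro G hG z
    rw [hLt]
    have h1 : 0 ≤ (L (h * G)) z :=
      hpos _ (fun w => mul_nonneg (hh w).le (hG w)) z
    exact mul_nonneg (inv_nonneg.2 hΛ.le) (div_nonneg h1 (hh z).le)
  have hLtnpos : ∀ (n : ℕ) (G : C(Z, ℝ)), (∀ z, 0 ≤ G z) → ∀ z, 0 ≤ ((Lt ^ n) G) z := by
    intro n
    induction n with
    | zero => intro G hG z; simpa using hG z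
    | succ n ih =>
      intro G hG z
      rw [hpow_succ]
      exact ih (Lt G) (hLtpos G hG) z
  -- pointwise limits
  have heval : ∀ (G : C(Z, ℝ)) (z : Z),
      Tendsto (fun n : ℕ => ((Lt ^ n) G) z) atTop (𝓝 (c G)) := by
    intro G z
    have hcont : Continuous fun F : C(Z, ℝ) => F z := continuous_eval_const z
    have := (hcont.tendsto (ContinuousMap.const Z (c G))).comp (hconv G)
    exact this
  -- `c` as a linear functional
  have hadd : ∀ G H : C(Z, ℝ), c (G + H) = c G + c H := by
    intro G H
    refine tendsto_nhds_unique (heval (G + H) z₀) ?_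
    have : Tendsto (fun n : ℕ => ((Lt ^ n) G) z₀ + ((Lt ^ n) H) z₀) atTop
        (𝓝 (c G + c H)) := (heval G z₀).add (heval H z₀)
    simpa [map_add] using this
  have hsmul : ∀ (r : ℝ) (G : C(Z, ℝ)), c (r • G) = r * c G := by
    intro r G
    refine tendsto_nhds_unique (heval (r • G) z₀) ?_
    have : Tendsto (fun n : ℕ => r * ((Lt ^ n) G) z₀) atTop (𝓝 (r * c G)) :=
      (heval G z₀).const_mul r
    simpa [_root_.map_smul] using this
  set clin : C(Z, ℝ) →ₗ[ℝ] ℝ :=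
    { toFun := c
      map_add' := hadd
      map_smul' := fun r G => by simpa using hsmul r G } with hclin
  have hposlin : ∀ f : C(Z, ℝ), (∀ z, 0 ≤ f z) → 0 ≤ clin f := by
    intro f hf
    exact ge_of_tendsto (heval f z₀)
      (Filter.Eventually.of_forall fun n => hLtnpos n f hf z₀)
  have hLtn1 : ∀ n : ℕ, (Lt ^ n) 1 = 1 := by
    intro n
    induction n with
    | zero => simp
    | succ n ih => rw [hpow_succ, hLt1, ih]
  have honelin : clin 1 = 1 := by
    have h1 : Tendsto (fun _ : ℕ => (1 : ℝ)) atTop (𝓝 (c 1)) := by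
      simpa [hLtn1] using heval 1 z₀
    exact (tendsto_nhds_unique h1 tendsto_const_nhds).symm ▸ rfl
  obtain ⟨μm, hμprob, hμrepr⟩ := exists_repr_measure hposlin honelin
  refine ⟨⟨μm, hμprob⟩, ?_, ?_, ?_⟩
  -- fixed point
  · intro G
    have hcLt : c (Lt G) = c G := by
      refine tendsto_nhds_unique (heval (Lt G) z₀) ?_
      have h2 : Tendsto (fun n : ℕ => ((Lt ^ (n + 1)) G) z₀) atTop (𝓝 (c G)) :=
        (heval G z₀).comp (tendsto_add_atTop_nat 1)
      simpa [hpow_succ] using h2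
    show ∫ z, (Lt G) z ∂μm = ∫ z, G z ∂μm
    rw [hμrepr (Lt G), hμrepr G]
    exact hcLt
  -- uniqueness
  · intro μ₁ hfix
    haveI : IsProbabilityMeasure (μ₁ : Measure Z) := μ₁.2
    have hμ₁n : ∀ (G : C(Z, ℝ)) (n : ℕ),
        ∫ z, ((Lt ^ n) G) z ∂(μ₁ : Measure Z) = ∫ z, G z ∂(μ₁ : Measure Z) := by
      intro G n
      induction n with
      | zero => simp
      | succ n ih =>
        have : ∀ z, ((Lt ^ (n+1)) G) z = (Lt ((Lt ^ n) G)) z := by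
          intro z; rw [hpow_succ']
        simp only [this]
        rw [hfix ((Lt ^ n) G), ih]
    have hint₁ : ∀ (ν : Measure Z) [IsFiniteMeasure ν] (G : C(Z, ℝ)),
        Integrable (fun z => G z) ν := fun ν _ G =>
      G.continuous.integrable_of_hasCompactSupport (HasCompactSupport.of_compactSpace _)
    have hlim : ∀ G : C(Z, ℝ), ∫ z, G z ∂(μ₁ : Measure Z) = c G := by
      intro G
      have hb : ∀ n : ℕ, |∫ z, G z ∂(μ₁ : Measure Z) - c G|
          ≤ ‖(Lt ^ n) G - ContinuousMap.const Z (c G)‖ := by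
        intro n
        have he : ∫ z, G z ∂(μ₁ : Measure Z) - c G
            = ∫ z, (((Lt ^ n) G) z - c G) ∂(μ₁ : Measure Z) := by
          rw [integral_sub (hint₁ _ _) (integrable_const _), integral_const]
          rw [hμ₁n G n]; simp
        rw [he, ← Real.norm_eq_abs]
        have hbd : ∀ᵐ z ∂(μ₁ : Measure Z),
            ‖((Lt ^ n) G) z - c G‖ ≤ ‖(Lt ^ n) G - ContinuousMap.const Z (c G)‖ := by
          refine Filter.Eventually.of_forall fun z => ?_
          have : ((Lt ^ n) G) z - c G = ((Lt ^ n) G - ContinuousMap.const Z (c G)) z := by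
            simp [ContinuousMap.sub_apply, ContinuousMap.const_apply]
          rw [this]
          exact ContinuousMap.norm_coe_le_norm _ z
        have := norm_integral_le_of_norm_le_const hbd
        simpa using this
      have hn0 : Tendsto (fun n : ℕ => ‖(Lt ^ n) G - ContinuousMap.const Z (c G)‖)
          atTop (𝓝 0) := tendsto_iff_norm_sub_tendsto_zero.1 (hconv G)
      have habs : |∫ z, G z ∂(μ₁ : Measure Z) - c G| ≤ 0 :=
        ge_of_tendsto hn0 (Filter.Eventually.of_forall hb)
      have := abs_nonneg (∫ z, G z ∂(μ₁ : Measure Z) - c G)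
      have h0 : |∫ z, G z ∂(μ₁ : Measure Z) - c G| = 0 := le_antisymm habs this
      have := abs_eq_zero.1 h0
      linarith
    apply Subtype.ext
    haveI inst2 : IsFiniteMeasure (μ₁ : Measure Z) := inferInstance
    refine ext_of_forall_lintegral_eq_of_IsFiniteMeasure (μ := (μ₁ : Measure Z)) ?_
    intro f
    set G : C(Z, ℝ) := ⟨fun z => (f z : ℝ), NNReal.continuous_coe.comp f.continuous⟩ with hG
    have hGnn : ∀ z, 0 ≤ G z := fun z => (f z).2
    have key : ∀ (ν : Measure Z) [IsFiniteMeasure ν],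
        ∫⁻ z, (f z : ℝ≥0∞) ∂ν = ENNReal.ofReal (∫ z, G z ∂ν) := by
      intro ν _
      rw [ofReal_integral_eq_lintegral_ofReal (hint₁ ν G) (ae_of_all _ hGnn)]
      congr 1
      funext z
      exact (ENNReal.ofReal_coe_nnreal (p := f z)).symm
    rw [key (μ₁ : Measure Z), key μm, hlim G, hμrepr G]
    rfl
  -- convergence
  · intro g gd hgd
    have hhg : h * gd = g := by
      ext z
      rw [ContinuousMap.mul_apply, hgd z, mul_comm, div_mul_cancel₀ _ (hh z).ne']
    have hLstep : ∀ G : C(Z, ℝ), L (h * G) = Λ • (h * Lt G) := by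
      intro G
      ext z
      have hz := hLt G z
      rw [ContinuousMap.smul_apply, ContinuousMap.mul_apply, smul_eq_mul, hz]
      field_simp [hΛ.ne', (hh z).ne']
    have hiter : ∀ n : ℕ, (L ^ n) g = (Λ ^ n) • (h * (Lt ^ n) gd) := by
      intro n
      induction n with
      | zero => simpa using hhg.symm
      | succ n ih =>
        have hstep : (L ^ (n + 1)) g = L ((L ^ n) g) := by rw [pow_succ']; rfl
        rw [hstep, ih, ContinuousLinearMap.map_smul, hLstep ((Lt ^ n) gd), ← hpow_succ']
        rw [smul_smul, ← pow_succ]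
    have hfinal : ∀ n : ℕ, (Λ ^ n)⁻¹ • ((L ^ n) g) = h * (Lt ^ n) gd := by
      intro n
      rw [hiter n, inv_smul_smul₀ (pow_ne_zero n hΛ.ne')]
    simp only [hfinal]
    have hmul : Tendsto (fun n : ℕ => h * (Lt ^ n) gd) atTop
        (𝓝 (h * ContinuousMap.const Z (c gd))) := by
      have hcont : Continuous fun F : C(Z, ℝ) => h * F := by
        have : Continuous fun p : C(Z, ℝ) × C(Z, ℝ) => p.1 * p.2 := continuous_mul
        exact this.comp (continuous_const.prodMk continuous_id)
      exact (hcont.tendsto _).comp (hconv gd)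
    have hrepr : ∫ z, gd z ∂(μm : Measure Z) = c gd := hμrepr gd
    show Tendsto _ atTop (𝓝 ((∫ z, gd z ∂μm) • h))
    rw [hrepr, show (c gd) • h = h * ContinuousMap.const Z (c gd) from by
      ext z; simp [mul_comm]]
    exact hmul
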